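/- Let P be a substochastic matrix on a finite set X with spectral radius < 1, G a finite group, π a unitary representation of G of dimension n, and A: oriented edges → G with A(−e) = A(e)^{−1}. Then the spectral radius of the extended matrix P^{A,π} (defined by [P^{A,π}]^{x,i}_{y,j} = P^x_y [π(A(x,y))]^i_j) is at most the spectral radius of P; in particular I − P^{A,π} is invertible. -/

import Mathlib

open Matrix Filter Finset

attribute [local instance] Matrix.linftyOpNormedRing Matrix.linftyOpNormedAlgebra

/-- The extended transition matrix P^{A,π} on X × {1,…,m}, with entries
P^x_y·[π(A(x,y))]^i_j. -/
noncomputable def extendedMatrix {X : Type*} [Fintype X] (P : Matrix X X ℝ)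
    {G : Type*} [Group G] (A : X → X → G) {m : ℕ}
    (π : G →* Matrix.unitaryGroup (Fin m) ℂ) :
    Matrix (X × Fin m) (X × Fin m) ℂ :=
  fun p q => (P p.1 q.1 : ℂ) * (π (A p.1 q.1) : Matrix (Fin m) (Fin m) ℂ) p.2 q.2

private lemma aux_star_dot {m : ℕ} (w : Fin m → ℂ) :
    star w ⬝ᵥ w = ((∑ i, ‖w i‖ ^ 2 : ℝ) : ℂ) := by
  simp only [dotProduct, Pi.star_apply, Complex.ofReal_sum]
  refine Finset.sum_congr rfl fun i _ => ?_
  rw [Complex.star_def, Complex.sq_norm, Complex.normSq_eq_conj_mul_self]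

/-- A unitary matrix preserves the ℓ² sum of squares. -/
private lemma aux_unitary_sq {m : ℕ} (U : Matrix.unitaryGroup (Fin m) ℂ) (u : Fin m → ℂ) :
    ∑ i, ‖((U : Matrix (Fin m) (Fin m) ℂ) *ᵥ u) i‖ ^ 2 = ∑ j, ‖u j‖ ^ 2 := by
  have key : star ((U : Matrix (Fin m) (Fin m) ℂ) *ᵥ u) ⬝ᵥ ((U : Matrix (Fin m) (Fin m) ℂ) *ᵥ u)
      = star u ⬝ᵥ u := by
    rw [Matrix.star_mulVec, Matrix.dotProduct_mulVec, Matrix.vecMul_vecMul,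
      ← Matrix.star_eq_conjTranspose, Matrix.UnitaryGroup.star_mul_self, Matrix.vecMul_one]
  rw [aux_star_dot, aux_star_dot] at key
  exact_mod_cast key

/-- ℓ² triangle inequality for finite sums of vectors. -/
private lemma aux_l2_triangle {X : Type*} [Fintype X] {m : ℕ} (g : X → Fin m → ℂ) :
    Real.sqrt (∑ i, ‖(∑ y, g y) i‖ ^ 2) ≤ ∑ y, Real.sqrt (∑ i, ‖g y i‖ ^ 2) := by
  have h := norm_sum_le (E := EuclideanSpace ℂ (Fin m)) Finset.univ
      (fun y => (WithLp.equiv 2 (Fin m → ℂ)).symm (g y))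
  have h1 : (∑ y, ((WithLp.equiv 2 (Fin m → ℂ)).symm (g y) : EuclideanSpace ℂ (Fin m)))
      = (WithLp.equiv 2 (Fin m → ℂ)).symm (∑ y, g y) := (WithLp.toLp_sum (p := 2) (s := Finset.univ) (f := g)).symm
  rw [h1] at h
  simp only [EuclideanSpace.norm_eq, WithLp.equiv_symm_apply, PiLp.toLp_apply] at h
  exact h

private lemma aux_pow_nonneg {X : Type*} [Fintype X] [DecidableEq X] {P : Matrix X X ℝ}
    (hnonneg : ∀ x y, 0 ≤ P x y) : ∀ (k : ℕ) x y, 0 ≤ (P ^ k) x y := by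
  intro k
  induction k with
  | zero => intro x y; simp only [pow_zero, Matrix.one_apply]; split <;> norm_num
  | succ k ih =>
      intro x y
      rw [pow_succ, Matrix.mul_apply]
      exact Finset.sum_nonneg fun z _ => mul_nonneg (ih x z) (hnonneg z y)

private lemma aux_key {X : Type*} [Fintype X] [DecidableEq X] [Nonempty X] (P : Matrix X X ℝ)
    (hnonneg : ∀ x y, 0 ≤ P x y)
    {G : Type*} [Group G] {m : ℕ}
    (π : G →* Matrix.unitaryGroup (Fin m) ℂ) (A : X → X → G)
    {μ : ℂ} (hμ : μ ∈ spectrum ℂ (extendedMatrix P A π)) :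
    (‖μ‖₊ : ENNReal) ≤ spectralRadius ℂ (P.map (Complex.ofReal)) := by
  classical
  set M := extendedMatrix P A π with hM
  -- eigenvector
  have h1 : Module.End.HasEigenvalue (Matrix.toLinAlgEquiv' M) μ := by
    rw [Module.End.hasEigenvalue_iff_mem_spectrum, AlgEquiv.spectrum_eq]
    exact hμ
  obtain ⟨v, hv⟩ := h1.exists_hasEigenvector
  have hEig : M *ᵥ v = μ • v := by
    simpa [Matrix.toLinAlgEquiv'_apply, Matrix.toLin'_apply] using hv.apply_eq_smul
  set w : X → ℝ := fun x => Real.sqrt (∑ j, ‖v (x, j)‖ ^ 2) with hwdef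
  have hw0 : ∀ x, 0 ≤ w x := fun x => Real.sqrt_nonneg _
  -- one-step inequality
  have hstep : ∀ x, ‖μ‖ * w x ≤ ∑ y, P x y * w y := by
    intro x
    have l1 : ‖μ‖ * w x = Real.sqrt (∑ j, ‖(M *ᵥ v) (x, j)‖ ^ 2) := by
      rw [hEig, hwdef]
      rw [← Real.sqrt_sq (norm_nonneg μ), ← Real.sqrt_mul (by positivity), Finset.mul_sum]
      congr 1
      refine Finset.sum_congr rfl fun j _ => ?_
      simp [Pi.smul_apply, norm_smul, mul_pow]
    have l2 : (fun i => (M *ᵥ v) (x, i))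
        = ∑ y, fun i => ((P x y : ℂ) • ((π (A x y) : Matrix (Fin m) (Fin m) ℂ)
            *ᵥ fun j => v (y, j))) i := by
      funext i
      rw [Finset.sum_apply]
      simp only [Matrix.mulVec, dotProduct, hM, extendedMatrix, Pi.smul_apply,
        smul_eq_mul, Fintype.sum_prod_type, Finset.mul_sum, mul_assoc]
    have l3 : Real.sqrt (∑ j, ‖(M *ᵥ v) (x, j)‖ ^ 2)
        ≤ ∑ y, Real.sqrt (∑ i, ‖((P x y : ℂ) • ((π (A x y) : Matrix (Fin m) (Fin m) ℂ)
            *ᵥ fun j => v (y, j))) i‖ ^ 2) := by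
      have h := aux_l2_triangle (fun y => fun i => ((P x y : ℂ) •
        ((π (A x y) : Matrix (Fin m) (Fin m) ℂ) *ᵥ fun j => v (y, j))) i)
      refine le_trans (le_of_eq ?_) h
      congr 1
      refine Finset.sum_congr rfl fun j _ => ?_
      rw [congrFun l2 j]
    rw [l1]
    refine l3.trans (le_of_eq (Finset.sum_congr rfl fun y _ => ?_))
    have : ∀ i, ‖((P x y : ℂ) • ((π (A x y) : Matrix (Fin m) (Fin m) ℂ)
        *ᵥ fun j => v (y, j))) i‖ ^ 2
        = (P x y) ^ 2 * ‖(((π (A x y) : Matrix (Fin m) (Fin m) ℂ))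
            *ᵥ fun j => v (y, j)) i‖ ^ 2 := by
      intro i
      simp [Pi.smul_apply, norm_smul, mul_pow, abs_of_nonneg (hnonneg x y)]
    simp_rw [this]
    rw [← Finset.mul_sum, aux_unitary_sq (π (A x y)) (fun j => v (y, j)),
      Real.sqrt_mul (by positivity), Real.sqrt_sq (hnonneg x y)]
  -- iterated inequality
  have hpow : ∀ (k : ℕ) (x : X), ‖μ‖ ^ k * w x ≤ ∑ y, (P ^ k) x y * w y := by
    intro k
    induction k with
    | zero =>
        intro x
        simp [Matrix.one_apply]
    | succ k ih =>
        intro x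
        calc ‖μ‖ ^ (k + 1) * w x = ‖μ‖ ^ k * (‖μ‖ * w x) := by ring
          _ ≤ ‖μ‖ ^ k * ∑ y, P x y * w y :=
              mul_le_mul_of_nonneg_left (hstep x) (by positivity)
          _ = ∑ y, P x y * (‖μ‖ ^ k * w y) := by
              rw [Finset.mul_sum]; exact Finset.sum_congr rfl fun y _ => by ring
          _ ≤ ∑ y, P x y * (∑ z, (P ^ k) y z * w z) :=
              Finset.sum_le_sum fun y _ =>
                mul_le_mul_of_nonneg_left (ih y) (hnonneg x y)
          _ = ∑ z, (P ^ (k + 1)) x z * w z := by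
              rw [pow_succ']
              simp_rw [Matrix.mul_apply, Finset.mul_sum, Finset.sum_mul]
              rw [Finset.sum_comm]
              exact Finset.sum_congr rfl fun z _ => Finset.sum_congr rfl fun y _ => by ring
  -- pick maximizing point
  obtain ⟨x0, -, hx0⟩ := Finset.exists_max_image Finset.univ w Finset.univ_nonempty
  have hWpos : 0 < w x0 := by
    obtain ⟨p, hp⟩ := Function.ne_iff.mp hv.2
    refine lt_of_lt_of_le ?_ (hx0 p.1 (Finset.mem_univ _))
    rw [hwdef]
    refine Real.sqrt_pos.mpr (Finset.sum_pos' (fun j _ => by positivity) ⟨p.2, Finset.mem_univ _, ?_⟩)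
    have : v (p.1, p.2) ≠ 0 := by simpa using hp
    exact pow_pos (norm_pos_iff.mpr this) 2
  set Pc := P.map (Complex.ofReal) with hPcdef
  have hmapow : ∀ k : ℕ, Pc ^ k = (P ^ k).map Complex.ofReal := by
    intro k
    have h0 : Pc = Complex.ofRealHom.mapMatrix P := rfl
    have h1 : (P ^ k).map Complex.ofReal = Complex.ofRealHom.mapMatrix (P ^ k) := rfl
    rw [h0, h1, map_pow]
  -- norm bound for powers
  have hk : ∀ k : ℕ, ‖μ‖₊ ^ k ≤ ‖Pc ^ k‖₊ := by
    intro k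
    rw [Matrix.linfty_opNNNorm_def]
    refine le_trans ?_ (Finset.le_sup (Finset.mem_univ x0))
    rw [← NNReal.coe_le_coe]
    push_cast
    have hnorm : ∀ y, ‖(Pc ^ k) x0 y‖ = (P ^ k) x0 y := by
      intro y
      rw [hmapow]
      simp only [Matrix.map_apply, Complex.norm_real]
      exact abs_of_nonneg (aux_pow_nonneg hnonneg k x0 y)
    have h1 : ‖μ‖ ^ k * w x0 ≤ (∑ y, (P ^ k) x0 y) * w x0 := by
      refine (hpow k x0).trans ?_
      rw [Finset.sum_mul]
      exact Finset.sum_le_sum fun y _ =>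
        mul_le_mul_of_nonneg_left (hx0 y (Finset.mem_univ y)) (aux_pow_nonneg hnonneg k x0 y)
    have h2 : ‖μ‖ ^ k ≤ ∑ y, (P ^ k) x0 y := le_of_mul_le_mul_right h1 hWpos
    calc ‖μ‖ ^ k ≤ ∑ y, (P ^ k) x0 y := h2
      _ = ∑ y, ‖(Pc ^ k) x0 y‖ := Finset.sum_congr rfl fun y _ => (hnorm y).symm
  -- Gelfand's formula
  haveI : CompleteSpace (Matrix X X ℂ) := FiniteDimensional.complete ℂ _
  have gel := spectrum.pow_nnnorm_pow_one_div_tendsto_nhds_spectralRadius Pc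
  refine ge_of_tendsto gel ?_
  filter_upwards [Filter.eventually_ge_atTop 1] with n hn
  have hn0 : (n : ℝ) ≠ 0 := by positivity
  have h1 : ((‖μ‖₊ : ENNReal)) ^ n ≤ (‖Pc ^ n‖₊ : ENNReal) := by
    rw [← ENNReal.coe_pow]
    exact_mod_cast hk n
  calc (‖μ‖₊ : ENNReal) = ((‖μ‖₊ : ENNReal) ^ n) ^ (1 / (n : ℝ)) := by
        rw [← ENNReal.rpow_natCast, ← ENNReal.rpow_mul, mul_one_div_cancel hn0,
          ENNReal.rpow_one]
    _ ≤ (‖Pc ^ n‖₊ : ENNReal) ^ (1 / (n : ℝ)) :=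
        ENNReal.rpow_le_rpow h1 (by positivity)

/-- for a nonnegative substochastic P with spectral radius < 1 and a
unitary representation π of a finite group G, the spectral radius of the extended matrix
P^{A,π} is at most the spectral radius of P; in particular I − P^{A,π} is invertible. -/
theorem stmt_12 {X : Type*} [Fintype X] [DecidableEq X] [Nonempty X] (P : Matrix X X ℝ)
    (hnonneg : ∀ x y, 0 ≤ P x y) (hsub : ∀ x, ∑ y, P x y ≤ 1)
    (hspec : spectralRadius ℂ (P.map (Complex.ofReal)) < 1)
    {G : Type*} [Group G] [Finite G] (m : ℕ) (hm : 1 ≤ m)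
    (π : G →* Matrix.unitaryGroup (Fin m) ℂ)
    (A : X → X → G) (hA : ∀ x y : X, A y x = (A x y)⁻¹) :
    spectralRadius ℂ (extendedMatrix P A π) ≤ spectralRadius ℂ (P.map (Complex.ofReal)) ∧
    IsUnit (1 - extendedMatrix P A π) := by
  have key : ∀ μ ∈ spectrum ℂ (extendedMatrix P A π),
      (‖μ‖₊ : ENNReal) ≤ spectralRadius ℂ (P.map (Complex.ofReal)) :=
    fun μ hμ => aux_key P hnonneg π A hμ
  constructor
  · exact iSup₂_le key
  · by_contra h
    have h1 : (1 : ℂ) ∈ spectrum ℂ (extendedMatrix P A π) := by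
      rw [spectrum.mem_iff]
      simpa using h
    have := key 1 h1
    simp only [nnnorm_one, ENNReal.coe_one] at this
    exact absurd (lt_of_le_of_lt this hspec) (lt_irrefl 1)
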